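/- Let X = C[0,1] with sup-metric d_∞ and P(φ,ϕ,q) = d_∞(φ,ϕ)/q, a complete generalized θ-parametric metric space with θ(a,b)=a+b, f = ln, α = 0. Let 1 < η ≤ 2 and g : [0,1] × ℝ → ℝ continuous with |g(t,x₁) − g(t,x₂)| ≤ r·(Γ(η+1)/4)·|x₁ − x₂| for some r ∈ [0,1). Define H : X → X by H(Ξ)(t) = (1/Γ(η))∫₀ᵗ (t−s)^{η−1} g(s,Ξ(s)) ds + (2t/Γ(η))∫₀¹ (∫₀ˢ (s−q)^{η−1} g(q,Ξ(q)) dq) ds. Then for all Ξ, χ ∈ X, sup_{t∈[0,1]} |H(Ξ)(t) − H(χ)(t)| ≤ r·d_∞(Ξ,χ), i.e., P(H(Ξ), H(χ), l) ≤ r·P(Ξ,χ,l) for all l > 0, and consequently H has a unique fixed point in X. -/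

import Mathlib

open MeasureTheory

/-- `X = C[0,1]` with the sup metric. -/
abbrev XC := C(Set.Icc (0:ℝ) 1, ℝ)

lemma rpow_cont {η : ℝ} (hη1 : 1 < η) : Continuous fun x : ℝ => x ^ (η - 1) :=
  continuous_iff_continuousAt.2 fun x =>
    Real.continuousAt_rpow_const x _ (Or.inr (by linarith))

lemma key_bound {η K : ℝ} (hη1 : 1 < η) (hK : 0 ≤ K) (Δ : ℝ → ℝ) (hΔ : Continuous Δ)
    (hb : ∀ q, |Δ q| ≤ K) {t : ℝ} (ht0 : 0 ≤ t) (ht1 : t ≤ 1) :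
    |∫ q in (0:ℝ)..t, (t - q) ^ (η - 1) * Δ q| ≤ K / η := by
  have hη0 : (0:ℝ) < η := by linarith
  have hc1 : Continuous fun q : ℝ => (t - q) ^ (η - 1) :=
    (rpow_cont hη1).comp (continuous_const.sub continuous_id)
  have hc : Continuous fun q : ℝ => (t - q) ^ (η - 1) * Δ q := hc1.mul hΔ
  have habs : |∫ q in (0:ℝ)..t, (t - q) ^ (η - 1) * Δ q|
      ≤ ∫ q in (0:ℝ)..t, |(t - q) ^ (η - 1) * Δ q| := by
    simpa only [Real.norm_eq_abs] using
      intervalIntegral.norm_integral_le_integral_norm (μ := volume)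
        (f := fun q => (t - q) ^ (η - 1) * Δ q) ht0
  have hmono : (∫ q in (0:ℝ)..t, |(t - q) ^ (η - 1) * Δ q|)
      ≤ ∫ q in (0:ℝ)..t, (t - q) ^ (η - 1) * K := by
    apply intervalIntegral.integral_mono_on ht0
    · exact (hc.abs).intervalIntegrable _ _
    · exact (hc1.mul continuous_const).intervalIntegrable _ _
    · intro x hx
      rw [abs_mul, abs_of_nonneg (Real.rpow_nonneg (by linarith [hx.2] : (0:ℝ) ≤ t - x) _)]
      exact mul_le_mul_of_nonneg_left (hb x)
        (Real.rpow_nonneg (by linarith [hx.2]) _)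
  have hval : (∫ q in (0:ℝ)..t, (t - q) ^ (η - 1)) = t ^ η / η := by
    have h1 : (∫ q in (0:ℝ)..t, (t - q) ^ (η - 1))
        = ∫ x in (t - t)..(t - 0), x ^ (η - 1) :=
      intervalIntegral.integral_comp_sub_left (fun x => x ^ (η - 1)) t
    rw [h1]
    simp only [sub_self, sub_zero]
    rw [integral_rpow (Or.inl (by linarith))]
    rw [sub_add_cancel, Real.zero_rpow hη0.ne']
    ring_nf
  have hval2 : (∫ q in (0:ℝ)..t, (t - q) ^ (η - 1) * K) = (t ^ η / η) * K := by
    rw [intervalIntegral.integral_mul_const, hval]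
  have htpow : t ^ η ≤ 1 := Real.rpow_le_one ht0 ht1 hη0.le
  calc |∫ q in (0:ℝ)..t, (t - q) ^ (η - 1) * Δ q|
      ≤ (t ^ η / η) * K := by rw [← hval2]; exact habs.trans hmono
    _ ≤ (1 / η) * K := by
        apply mul_le_mul_of_nonneg_right _ hK
        gcongr
    _ = K / η := by ring

theorem stmt19 (η r : ℝ) (hη1 : 1 < η) (hη2 : η ≤ 2) (hr0 : 0 ≤ r) (hr1 : r < 1)
    (g : ℝ → ℝ → ℝ) (hg : Continuous fun p : ℝ × ℝ => g p.1 p.2)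
    (hlip : ∀ t x₁ x₂ : ℝ, |g t x₁ - g t x₂| ≤ r * (Real.Gamma (η + 1) / 4) * |x₁ - x₂|)
    (H : XC → XC)
    (hH : ∀ (Ξ : XC) (t : Set.Icc (0:ℝ) 1),
      H Ξ t =
        (1 / Real.Gamma η) *
          (∫ s in (0:ℝ)..(t:ℝ),
            ((t:ℝ) - s) ^ (η - 1) * g s (Set.IccExtend (by norm_num : (0:ℝ) ≤ 1) Ξ s)) +
        (2 * (t:ℝ) / Real.Gamma η) *
          (∫ s in (0:ℝ)..1, ∫ q in (0:ℝ)..s,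
            (s - q) ^ (η - 1) * g q (Set.IccExtend (by norm_num : (0:ℝ) ≤ 1) Ξ q))) :
    (∀ Ξ χ : XC, dist (H Ξ) (H χ) ≤ r * dist Ξ χ) ∧
    (∀ Ξ χ : XC, ∀ l > (0:ℝ), dist (H Ξ) (H χ) / l ≤ r * (dist Ξ χ / l)) ∧
    (∃! Ξ : XC, H Ξ = Ξ) := by
  have hη0 : (0:ℝ) < η := by linarith
  have hΓ : 0 < Real.Gamma η := Real.Gamma_pos_of_pos hη0
  have hΓ1 : Real.Gamma (η + 1) = η * Real.Gamma η := Real.Gamma_add_one hη0.ne'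
  have hmain : ∀ Ξ χ : XC, dist (H Ξ) (H χ) ≤ r * dist Ξ χ := by
    intro Ξ χ
    set E : XC → ℝ → ℝ := fun f => Set.IccExtend (by norm_num : (0:ℝ) ≤ 1) f with hE
    set D := dist Ξ χ with hD
    have hD0 : 0 ≤ D := dist_nonneg
    set K := r * (Real.Gamma (η + 1) / 4) * D with hKdef
    have hK0 : 0 ≤ K := by
      apply mul_nonneg (mul_nonneg hr0 _) hD0
      positivity
    set Δ : ℝ → ℝ := fun q => g q (E Ξ q) - g q (E χ q) with hΔdef
    have hEc : ∀ f : XC, Continuous (E f) := fun f => f.continuous.Icc_extend'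
    have hΔc : Continuous Δ := by
      apply Continuous.sub
      · exact hg.comp (continuous_id.prodMk (hEc Ξ))
      · exact hg.comp (continuous_id.prodMk (hEc χ))
    have hΔb : ∀ q, |Δ q| ≤ K := by
      intro q
      refine (hlip q _ _).trans ?_
      apply mul_le_mul_of_nonneg_left _ (by positivity)
      have := ContinuousMap.dist_apply_le_dist (f := Ξ) (g := χ)
        (Set.projIcc (0:ℝ) 1 (by norm_num) q)
      simpa [E, Set.IccExtend, Real.dist_eq] using this
    rw [ContinuousMap.dist_le (mul_nonneg hr0 hD0)]
    intro t
    rw [hH Ξ t, hH χ t, Real.dist_eq]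
    obtain ⟨ht0, ht1⟩ := t.2
    -- rewrite differences of integrals
    have hcont₁ : ∀ f : XC, Continuous fun s : ℝ => ((t:ℝ) - s) ^ (η - 1) * g s (E f s) := by
      intro f
      exact ((rpow_cont hη1).comp (continuous_const.sub continuous_id)).mul
        (hg.comp (continuous_id.prodMk (hEc f)))
    have hcont₂ : ∀ f : XC, Continuous fun s : ℝ =>
        ∫ q in (0:ℝ)..s, (s - q) ^ (η - 1) * g q (E f q) := by
      intro f
      apply intervalIntegral.continuous_parametric_intervalIntegral_of_continuous
        (f := fun s q => (s - q) ^ (η - 1) * g q (E f q))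
      · apply Continuous.mul
        · exact (rpow_cont hη1).comp (continuous_fst.sub continuous_snd)
        · exact (hg.comp (continuous_id.prodMk (hEc f))).comp continuous_snd
      · exact continuous_id
    have e1 : (∫ s in (0:ℝ)..(t:ℝ), ((t:ℝ) - s) ^ (η - 1) * g s (E Ξ s))
        - (∫ s in (0:ℝ)..(t:ℝ), ((t:ℝ) - s) ^ (η - 1) * g s (E χ s))
        = ∫ s in (0:ℝ)..(t:ℝ), ((t:ℝ) - s) ^ (η - 1) * Δ s := by
      rw [← intervalIntegral.integral_sub ((hcont₁ Ξ).intervalIntegrable _ _)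
        ((hcont₁ χ).intervalIntegrable _ _)]
      congr 1; funext s; simp [Δ]; ring
    have e2in : ∀ s : ℝ, (∫ q in (0:ℝ)..s, (s - q) ^ (η - 1) * g q (E Ξ q))
        - (∫ q in (0:ℝ)..s, (s - q) ^ (η - 1) * g q (E χ q))
        = ∫ q in (0:ℝ)..s, (s - q) ^ (η - 1) * Δ q := by
      intro s
      have c1 : Continuous fun q : ℝ => (s - q) ^ (η - 1) * g q (E Ξ q) :=
        ((rpow_cont hη1).comp (continuous_const.sub continuous_id)).mul
          (hg.comp (continuous_id.prodMk (hEc Ξ)))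
      have c2 : Continuous fun q : ℝ => (s - q) ^ (η - 1) * g q (E χ q) :=
        ((rpow_cont hη1).comp (continuous_const.sub continuous_id)).mul
          (hg.comp (continuous_id.prodMk (hEc χ)))
      rw [← intervalIntegral.integral_sub (c1.intervalIntegrable _ _)
        (c2.intervalIntegrable _ _)]
      congr 1; funext q; simp [Δ]; ring
    have e2 : (∫ s in (0:ℝ)..1, ∫ q in (0:ℝ)..s, (s - q) ^ (η - 1) * g q (E Ξ q))
        - (∫ s in (0:ℝ)..1, ∫ q in (0:ℝ)..s, (s - q) ^ (η - 1) * g q (E χ q))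
        = ∫ s in (0:ℝ)..1, ∫ q in (0:ℝ)..s, (s - q) ^ (η - 1) * Δ q := by
      rw [← intervalIntegral.integral_sub ((hcont₂ Ξ).intervalIntegrable _ _)
        ((hcont₂ χ).intervalIntegrable _ _)]
      congr 1; funext s; exact e2in s
    have b1 : |∫ s in (0:ℝ)..(t:ℝ), ((t:ℝ) - s) ^ (η - 1) * Δ s| ≤ K / η :=
      key_bound hη1 hK0 Δ hΔc hΔb ht0 ht1
    have b2 : |∫ s in (0:ℝ)..1, ∫ q in (0:ℝ)..s, (s - q) ^ (η - 1) * Δ q| ≤ K / η := by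
      have := intervalIntegral.norm_integral_le_of_norm_le_const
        (a := (0:ℝ)) (b := 1) (C := K / η)
        (f := fun s => ∫ q in (0:ℝ)..s, (s - q) ^ (η - 1) * Δ q) ?_
      · simpa using this
      · intro s hs
        rw [Set.uIoc_of_le (by norm_num : (0:ℝ) ≤ 1)] at hs
        exact key_bound hη1 hK0 Δ hΔc hΔb hs.1.le hs.2
    calc |(1 / Real.Gamma η) * (∫ s in (0:ℝ)..(t:ℝ), ((t:ℝ) - s) ^ (η - 1) * g s (E Ξ s))
          + (2 * (t:ℝ) / Real.Gamma η) * (∫ s in (0:ℝ)..1, ∫ q in (0:ℝ)..s,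
              (s - q) ^ (η - 1) * g q (E Ξ q))
          - ((1 / Real.Gamma η) * (∫ s in (0:ℝ)..(t:ℝ), ((t:ℝ) - s) ^ (η - 1) * g s (E χ s))
          + (2 * (t:ℝ) / Real.Gamma η) * (∫ s in (0:ℝ)..1, ∫ q in (0:ℝ)..s,
              (s - q) ^ (η - 1) * g q (E χ q)))|
        = |(1 / Real.Gamma η) * (∫ s in (0:ℝ)..(t:ℝ), ((t:ℝ) - s) ^ (η - 1) * Δ s)
          + (2 * (t:ℝ) / Real.Gamma η) *
            (∫ s in (0:ℝ)..1, ∫ q in (0:ℝ)..s, (s - q) ^ (η - 1) * Δ q)| := by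
          rw [← e1, ← e2]; congr 1; ring
      _ ≤ (1 / Real.Gamma η) * |∫ s in (0:ℝ)..(t:ℝ), ((t:ℝ) - s) ^ (η - 1) * Δ s|
          + (2 * (t:ℝ) / Real.Gamma η) *
            |∫ s in (0:ℝ)..1, ∫ q in (0:ℝ)..s, (s - q) ^ (η - 1) * Δ q| := by
          refine (abs_add_le _ _).trans ?_
          rw [abs_mul, abs_mul]
          gcongr
          · exact le_of_eq (abs_of_nonneg (by positivity))
          · exact le_of_eq (abs_of_nonneg (div_nonneg (by linarith) hΓ.le))
      _ ≤ (1 / Real.Gamma η) * (K / η) + (2 * (t:ℝ) / Real.Gamma η) * (K / η) :=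
          add_le_add
            (mul_le_mul_of_nonneg_left b1 (by positivity))
            (mul_le_mul_of_nonneg_left b2 (div_nonneg (by linarith) hΓ.le))
      _ = (1 + 2 * (t:ℝ)) * (K / (η * Real.Gamma η)) := by field_simp
      _ ≤ 3 * (K / (η * Real.Gamma η)) := by
          apply mul_le_mul_of_nonneg_right (by linarith) (by positivity)
      _ = 3 * (r * D / 4) := by rw [hKdef, hΓ1]; field_simp
      _ ≤ r * D := by nlinarith
  refine ⟨hmain, ?_, ?_⟩
  · intro Ξ χ l hl
    rw [mul_div_assoc']
    gcongr
    · exact hmain Ξ χ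
  · have hnonempty : Nonempty XC := ⟨ContinuousMap.const _ 0⟩
    have hcw : ContractingWith ⟨r, hr0⟩ H := by
      constructor
      · exact_mod_cast hr1
      · apply LipschitzWith.of_dist_le_mul
        intro x y
        exact hmain x y
    exact ⟨hcw.fixedPoint H, hcw.fixedPoint_isFixedPt,
      fun x hx => hcw.fixedPoint_unique hx⟩
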